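/- Let f, a be smooth on (0,∞) with f, f', 1-a > 0, let λ > 1, and suppose q(r) = n(1-a(r))f(r)/(r f'(r)) > 1 for all r (which holds for the n-vortex with λ > 1). Let L_m = F̃_m* F̃_m + J M_m with J = diag(1,0,0,0), and suppose M₁ ≤ 0 with M_m - M₁ = (1-q²)(m²-1)/r² < 0 as a multiplication operator for m ≥ 2. Then for any vector of the form W̃ = (w₁, w₂, w₃, w₄) with F̃_m W̃ = 0 and w₁ ≢ 0, one has ⟨W̃, L_m W̃⟩ = ⟨w₁, M_m w₁⟩ < 0, so L_m has a negative eigenvalue. -/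
import Mathlib


open Set MeasureTheory

/-- The measure `r dr` on `(0,∞)`. -/
noncomputable def rmeasure : Measure ℝ :=
  (volume.restrict (Set.Ioi (0:ℝ))).withDensity fun r => ENNReal.ofReal r


open scoped ENNReal

lemma rmeasure_ac : rmeasure ≪ volume.restrict (Set.Ioi (0:ℝ)) :=
  withDensity_absolutelyContinuous _ _

lemma rmeasure_ae_mem : ∀ᵐ r ∂rmeasure, r ∈ Ioi (0:ℝ) :=
  rmeasure_ac.ae_le (ae_restrict_mem measurableSet_Ioi)

lemma rmeasure_Ioo_pos {a b : ℝ} (ha : 0 < a) (hab : a < b) :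
    0 < rmeasure (Ioo a b) := by
  have hsub : Ioo a b ⊆ Ioi (0:ℝ) := fun x hx => lt_trans ha hx.1
  have h1 : rmeasure (Ioo a b)
      = ∫⁻ x in Ioo a b, ENNReal.ofReal x ∂(volume.restrict (Ioi (0:ℝ))) := by
    simp [rmeasure, withDensity_apply _ measurableSet_Ioo]
  have h2 : (volume.restrict (Ioi (0:ℝ))).restrict (Ioo a b)
      = volume.restrict (Ioo a b) := by
    rw [Measure.restrict_restrict measurableSet_Ioo, Set.inter_eq_left.mpr hsub]
  have h3 : ∫⁻ x in Ioo a b, ENNReal.ofReal a ∂volume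
      ≤ ∫⁻ x in Ioo a b, ENNReal.ofReal x ∂volume := by
    apply setLIntegral_mono' measurableSet_Ioo
    intro x hx
    exact ENNReal.ofReal_le_ofReal (le_of_lt hx.1)
  have h4 : (0:ℝ≥0∞) < ∫⁻ x in Ioo a b, ENNReal.ofReal a ∂volume := by
    rw [setLIntegral_const]
    refine ENNReal.mul_pos ?_ ?_
    · simp [ENNReal.ofReal_pos, ha]
    · simp [Real.volume_Ioo, sub_pos, hab]
  rw [h1, h2]
  exact lt_of_lt_of_le h4 h3

lemma neg_integral {c w : ℝ → ℝ} (hc : ∀ r ∈ Ioi (0:ℝ), c r < 0)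
    (hwcont : ContinuousOn w (Ioi 0)) (hw : ∃ r ∈ Ioi (0:ℝ), w r ≠ 0)
    (hint : Integrable (fun r => c r * (w r)^2) rmeasure) :
    (∫ r, c r * (w r)^2 ∂rmeasure) < 0 := by
  obtain ⟨r₀, hr₀, hw0⟩ := hw
  set g : ℝ → ℝ := fun r => -(c r * (w r)^2) with hg
  have hnn : 0 ≤ᵐ[rmeasure] g := by
    filter_upwards [rmeasure_ae_mem] with r hr
    have := hc r hr
    have h2 := sq_nonneg (w r)
    simp only [g, Pi.zero_apply]
    nlinarith
  have hcontat : ContinuousAt w r₀ :=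
    hwcont.continuousAt (isOpen_Ioi.mem_nhds hr₀)
  have hev : ∀ᶠ x in nhds r₀, w x ≠ 0 ∧ x ∈ Ioi (0:ℝ) :=
    (hcontat.eventually_ne hw0).and (isOpen_Ioi.eventually_mem hr₀)
  obtain ⟨ε, hε, hball⟩ := Metric.eventually_nhds_iff.mp hev
  set δ : ℝ := min (ε/2) (r₀/2) with hδ
  have hδpos : 0 < δ := lt_min (by linarith) (by simpa using half_pos (mem_Ioi.mp hr₀))
  have hIsub : ∀ x ∈ Ioo (r₀ - δ) (r₀ + δ), w x ≠ 0 ∧ x ∈ Ioi (0:ℝ) := by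
    intro x hx
    apply hball
    rw [Real.dist_eq, abs_lt]
    constructor <;>
    · have h1 : δ ≤ ε/2 := min_le_left _ _
      cases hx with | intro h1' h2' => linarith
  have hsupp : Ioo (r₀ - δ) (r₀ + δ) ⊆ Function.support g := by
    intro x hx
    obtain ⟨hwx, hxpos⟩ := hIsub x hx
    have h1 := hc x hxpos
    have h2 : 0 < (w x)^2 := by positivity
    simp only [Function.mem_support, g]
    nlinarith
  have hμ : 0 < rmeasure (Function.support g) := by
    refine lt_of_lt_of_le ?_ (measure_mono hsupp)
    apply rmeasure_Ioo_pos
    · have : δ ≤ r₀/2 := min_le_right _ _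
      linarith [mem_Ioi.mp hr₀]
    · linarith
  have hpos : 0 < ∫ r, g r ∂rmeasure :=
    (integral_pos_iff_support_of_nonneg_ae hnn hint.neg).mpr hμ
  have heq : (∫ r, g r ∂rmeasure) = -∫ r, c r * (w r)^2 ∂rmeasure := by
    simp [g, integral_neg]
  linarith [heq ▸ hpos]

/-- the instability mechanism for higher-degree vortices. With `λ > 1`,
`q > 1`, `L_m = F̃_m* F̃_m + J M_m`, `J = diag(1,0,0,0)`, `M₁ ≤ 0` and
`M_m - M₁ = (1-q²)(m²-1)/r² < 0` for `m ≥ 2`: any `W̃` with `F̃_m W̃ = 0` and first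
component `w₁ ≢ 0` satisfies `⟨W̃, L_m W̃⟩ = ⟨w₁, M_m w₁⟩ < 0`, so the quadratic form of
`L_m` has a negative direction. -/
theorem stmt18 (n : ℕ) (hn : 2 ≤ n) (m : ℕ) (hm : 2 ≤ m) (lam : ℝ) (hlam : 1 < lam)
    (f a : ℝ → ℝ)
    (hf : ∀ r ∈ Ioi (0:ℝ), 0 < f r)
    (hf' : ∀ r ∈ Ioi (0:ℝ), 0 < deriv f r)
    (ha : ∀ r ∈ Ioi (0:ℝ), a r < 1)
    -- q(r) = n(1-a)f/(r f') > 1 on (0,∞) (the case λ > 1):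
    (hq : ∀ r ∈ Ioi (0:ℝ), 1 < (n:ℝ) * (1 - a r) * f r / (r * deriv f r))
    -- M₁ is a non-positive operator w.r.t. the L²(r dr) pairing:
    (M1 : (ℝ → ℝ) →ₗ[ℝ] (ℝ → ℝ))
    (hM1 : ∀ u : ℝ → ℝ, (∫ r, u r * M1 u r ∂rmeasure) ≤ 0)
    -- F̃_m and its formal adjoint F̃_m*:
    (Fm Fstar : (ℝ → Fin 4 → ℝ) →ₗ[ℝ] (ℝ → Fin 4 → ℝ))
    (hadj : ∀ U W : ℝ → Fin 4 → ℝ,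
      (∫ r, (∑ k, Fm U r k * W r k) ∂rmeasure)
        = ∫ r, (∑ k, U r k * Fstar W r k) ∂rmeasure)
    -- the test vector W̃, annihilated by F̃_m, with nontrivial first component w₁:
    (Wt : ℝ → Fin 4 → ℝ) (hFW : Fm Wt = 0)
    (hw1ne : ∃ r ∈ Ioi (0:ℝ), Wt r 0 ≠ 0)
    (hw1cont : ContinuousOn (fun r => Wt r 0) (Ioi 0))
    -- integrability of the relevant pairings:
    (hint1 : Integrable (fun r => Wt r 0 * M1 (fun s => Wt s 0) r) rmeasure)
    (hint2 : Integrable (fun r =>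
      (1 - ((n:ℝ) * (1 - a r) * f r / (r * deriv f r))^2) * ((m:ℝ)^2 - 1) / r^2
        * (Wt r 0)^2) rmeasure) :
    -- ⟨W̃, L_m W̃⟩ = ⟨w₁, M_m w₁⟩:
    ((∫ r, (∑ k, Wt r k * (Fstar (Fm Wt) r k
        + (if k = (0 : Fin 4) then
            M1 (fun s => Wt s 0) r
              + (1 - ((n:ℝ) * (1 - a r) * f r / (r * deriv f r))^2)
                * ((m:ℝ)^2 - 1) / r^2 * Wt r 0
          else 0))) ∂rmeasure)
      = ∫ r, (Wt r 0 * (M1 (fun s => Wt s 0) r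
          + (1 - ((n:ℝ) * (1 - a r) * f r / (r * deriv f r))^2)
            * ((m:ℝ)^2 - 1) / r^2 * Wt r 0)) ∂rmeasure) ∧
    -- and this quantity is strictly negative:
    ((∫ r, (Wt r 0 * (M1 (fun s => Wt s 0) r
        + (1 - ((n:ℝ) * (1 - a r) * f r / (r * deriv f r))^2)
          * ((m:ℝ)^2 - 1) / r^2 * Wt r 0)) ∂rmeasure) < 0) ∧
    -- so the quadratic form of L_m has a negative direction:
    (∃ W : ℝ → Fin 4 → ℝ, (∃ r ∈ Ioi (0:ℝ), W r ≠ 0) ∧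
      (∫ r, (∑ k, W r k * (Fstar (Fm W) r k
        + (if k = (0 : Fin 4) then
            M1 (fun s => W s 0) r
              + (1 - ((n:ℝ) * (1 - a r) * f r / (r * deriv f r))^2)
                * ((m:ℝ)^2 - 1) / r^2 * W r 0
          else 0))) ∂rmeasure) < 0) := by
  have hc : ∀ r ∈ Ioi (0:ℝ),
      (1 - ((n:ℝ) * (1 - a r) * f r / (r * deriv f r))^2) * ((m:ℝ)^2 - 1) / r^2 < 0 := by
    intro r hr
    have hq1 := hq r hr
    have hr0 : (0:ℝ) < r := hr
    have hm2 : (2:ℝ) ≤ (m:ℝ) := by exact_mod_cast hm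
    have h1 : 1 < ((n:ℝ) * (1 - a r) * f r / (r * deriv f r))^2 := by nlinarith
    have h2 : (1 - ((n:ℝ) * (1 - a r) * f r / (r * deriv f r))^2) * ((m:ℝ)^2 - 1) < 0 := by
      have hA : (1 - ((n:ℝ) * (1 - a r) * f r / (r * deriv f r))^2) < 0 := by linarith
      have hB : (0:ℝ) < (m:ℝ)^2 - 1 := by nlinarith
      exact mul_neg_of_neg_of_pos hA hB
    exact div_neg_of_neg_of_pos h2 (by positivity)
  have heq1 : (∫ r, (∑ k, Wt r k * (Fstar (Fm Wt) r k
        + (if k = (0 : Fin 4) then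
            M1 (fun s => Wt s 0) r
              + (1 - ((n:ℝ) * (1 - a r) * f r / (r * deriv f r))^2)
                * ((m:ℝ)^2 - 1) / r^2 * Wt r 0
          else 0))) ∂rmeasure)
      = ∫ r, (Wt r 0 * (M1 (fun s => Wt s 0) r
          + (1 - ((n:ℝ) * (1 - a r) * f r / (r * deriv f r))^2)
            * ((m:ℝ)^2 - 1) / r^2 * Wt r 0)) ∂rmeasure := by
    rw [hFW, map_zero]
    congr 1
    funext r
    simp [Fin.sum_univ_four]
  have hneg2 : (∫ r, (1 - ((n:ℝ) * (1 - a r) * f r / (r * deriv f r))^2)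
      * ((m:ℝ)^2 - 1) / r^2 * (Wt r 0)^2 ∂rmeasure) < 0 :=
    neg_integral hc hw1cont hw1ne hint2
  have hsplit : (∫ r, (Wt r 0 * (M1 (fun s => Wt s 0) r
        + (1 - ((n:ℝ) * (1 - a r) * f r / (r * deriv f r))^2)
          * ((m:ℝ)^2 - 1) / r^2 * Wt r 0)) ∂rmeasure)
      = (∫ r, Wt r 0 * M1 (fun s => Wt s 0) r ∂rmeasure)
        + ∫ r, (1 - ((n:ℝ) * (1 - a r) * f r / (r * deriv f r))^2)
            * ((m:ℝ)^2 - 1) / r^2 * (Wt r 0)^2 ∂rmeasure := by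
    rw [← integral_add hint1 hint2]
    congr 1
    funext r
    ring
  have hneg : (∫ r, (Wt r 0 * (M1 (fun s => Wt s 0) r
        + (1 - ((n:ℝ) * (1 - a r) * f r / (r * deriv f r))^2)
          * ((m:ℝ)^2 - 1) / r^2 * Wt r 0)) ∂rmeasure) < 0 := by
    rw [hsplit]
    have := hM1 (fun s => Wt s 0)
    linarith
  refine ⟨heq1, hneg, ⟨Wt, ?_, ?_⟩⟩
  · obtain ⟨r₀, hr₀, hw0⟩ := hw1ne
    exact ⟨r₀, hr₀, fun h => hw0 (by rw [h]; rfl)⟩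
  · rw [heq1]
    exact hneg
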